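/- Let J ⊆ ℝ be a nonempty open interval, α, β ∈ (0,1) with α+β=1, and F, G : J → ℝ differentiable with derivatives f, g satisfying [F(b)−F(a)]·g(αa+βb) = [G(b)−G(a)]·f(αa+βb) for all a, b ∈ J. Let I ⊆ J be a nonempty interval on which g never vanishes, and define v(x) = f(x)/g(x) for x ∈ I. Then for all a, b ∈ I: β·g(a)·(v(αa+βb) − v(a)) = α·g(b)·(v(b) − v(αa+βb)). -/

import Mathlib

/-- Lemma 2.1 -/
theorem stmt_0 (J I : Set ℝ) (hJo : IsOpen J) (hJc : J.OrdConnected) (hJne : J.Nonempty)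
    (α β : ℝ) (hα : α ∈ Set.Ioo (0:ℝ) 1) (hβ : β ∈ Set.Ioo (0:ℝ) 1) (hαβ : α + β = 1)
    (F G f g : ℝ → ℝ)
    (hF : ∀ x ∈ J, HasDerivAt F (f x) x) (hG : ∀ x ∈ J, HasDerivAt G (g x) x)
    (heq : ∀ a ∈ J, ∀ b ∈ J,
      (F b - F a) * g (α * a + β * b) = (G b - G a) * f (α * a + β * b))
    (hIJ : I ⊆ J) (hIne : I.Nonempty) (hIc : I.OrdConnected)
    (hg : ∀ x ∈ I, g x ≠ 0)
    (v : ℝ → ℝ) (hv : ∀ x ∈ I, v x = f x / g x) :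
    ∀ a ∈ I, ∀ b ∈ I,
      β * g a * (v (α * a + β * b) - v a) = α * g b * (v b - v (α * a + β * b)) := by
  have hα0 := hα.1
  have hβ0 := hβ.1
  have hIconv : Convex ℝ I := hIc.convex
  have hmem : ∀ x ∈ I, ∀ y ∈ I, α * x + β * y ∈ I := by
    intro x hx y hy
    have := hIconv hx hy hα.1.le hβ.1.le hαβ
    simpa [smul_eq_mul] using this
  -- G is injective on I
  have hGlt : ∀ x ∈ I, ∀ y ∈ I, x < y → G x ≠ G y := by
    intro x hx y hy hxy hGe
    have hIcc : Set.Icc x y ⊆ I := hIc.out hx hy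
    obtain ⟨c, hc, hc'⟩ := exists_hasDerivAt_eq_slope G g hxy
      (fun t ht => ((hG t (hIJ (hIcc ht))).continuousAt).continuousWithinAt)
      (fun t ht => hG t (hIJ (hIcc (Set.mem_Icc_of_Ioo ht))))
    have hcI : c ∈ I := hIcc (Set.mem_Icc_of_Ioo hc)
    rw [hGe] at hc'
    simp at hc'
    exact hg c hcI hc'
  have hGne : ∀ x ∈ I, ∀ y ∈ I, x ≠ y → G y ≠ G x := by
    intro x hx y hy hxy
    rcases lt_or_gt_of_ne hxy with h | h
    · exact (hGlt x hx y hy h).symm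
    · exact hGlt y hy x hx h
  -- key identity
  have hkey : ∀ x ∈ I, ∀ y ∈ I, x ≠ y →
      v (α * x + β * y) = (F y - F x) / (G y - G x) := by
    intro x hx y hy hxy
    have hmI : α * x + β * y ∈ I := hmem x hx y hy
    have hgm := hg _ hmI
    have hD := hGne x hx y hy hxy
    have he := heq x (hIJ hx) y (hIJ hy)
    rw [hv _ hmI]
    rw [div_eq_div_iff hgm (sub_ne_zero_of_ne hD)]
    linarith [he]
  intro a ha b hb
  rcases eq_or_ne a b with rfl | hab
  · have : α * a + β * a = a := by linear_combination a * hαβ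
    rw [this]; ring
  -- main case
  set m := α * a + β * b with hm
  have hmI : m ∈ I := hmem a ha b hb
  set c := a ⊓ b with hc
  set d := a ⊔ b with hd
  have hcd : c < d := min_lt_max.mpr hab
  have hcdI : Set.Icc c d ⊆ I := hIc.out (by rcases le_total a b with h | h <;> simp [hc, hd, h, ha, hb]) (by rcases le_total a b with h | h <;> simp [hc, hd, h, ha, hb])
  have e1 : m - a = β * (b - a) := by rw [hm]; linear_combination a * hαβ
  have e2 : b - m = α * (b - a) := by rw [hm]; linear_combination -b * hαβ
  have hmcd : m ∈ Set.Ioo c d := by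
    rcases lt_or_gt_of_ne hab with h | h
    · have h1 : c = a := min_eq_left h.le
      have h2 : d = b := max_eq_right h.le
      rw [Set.mem_Ioo, h1, h2]
      constructor
      · nlinarith [mul_pos hβ0 (sub_pos.mpr h)]
      · nlinarith [mul_pos hα0 (sub_pos.mpr h)]
    · have h1 : c = b := min_eq_right h.le
      have h2 : d = a := max_eq_left h.le
      rw [Set.mem_Ioo, h1, h2]
      constructor
      · nlinarith [mul_pos hα0 (sub_pos.mpr h)]
      · nlinarith [mul_pos hβ0 (sub_pos.mpr h)]
  have hIooI : Set.Ioo c d ⊆ I := fun x hx => hcdI (Set.mem_Icc_of_Ioo hx)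
  -- v is differentiable at m
  obtain ⟨w, hw⟩ : ∃ w, HasDerivAt v w m := by
    have hmc : (0:ℝ) < m - c := by linarith [hmcd.1]
    have hdm : (0:ℝ) < d - m := by linarith [hmcd.2]
    obtain ⟨ε, hε0, hεa, hεb⟩ : ∃ ε : ℝ, 0 < ε ∧ β * ε < m - c ∧ α * ε < d - m := by
      refine ⟨min ((m - c) / β) ((d - m) / α) / 2,
        div_pos (lt_min (div_pos hmc hβ0) (div_pos hdm hα0)) two_pos, ?_, ?_⟩
      · have h1 : min ((m - c) / β) ((d - m) / α) / 2 < (m - c) / β := by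
          have h2 : min ((m - c) / β) ((d - m) / α) ≤ (m - c) / β := min_le_left _ _
          have h3 : 0 < (m - c) / β := div_pos hmc hβ0
          linarith
        calc β * (min ((m - c) / β) ((d - m) / α) / 2) < β * ((m - c) / β) :=
              mul_lt_mul_of_pos_left h1 hβ0
          _ = m - c := by field_simp
      · have h1 : min ((m - c) / β) ((d - m) / α) / 2 < (d - m) / α := by
          have h2 : min ((m - c) / β) ((d - m) / α) ≤ (d - m) / α := min_le_right _ _
          have h3 : 0 < (d - m) / α := div_pos hdm hα0
          linarith
        calc α * (min ((m - c) / β) ((d - m) / α) / 2) < α * ((d - m) / α) :=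
              mul_lt_mul_of_pos_left h1 hα0
          _ = d - m := by field_simp
    obtain ⟨a', b', ha'b', hrep, ha'mem, hb'mem⟩ :
        ∃ a' b' : ℝ, a' < b' ∧ α * a' + β * b' = m ∧
          a' ∈ Set.Ioo c d ∧ b' ∈ Set.Ioo c d := by
      refine ⟨m - β * ε, m + α * ε, by nlinarith [mul_pos hβ0 hε0, mul_pos hα0 hε0],
        by linear_combination m * hαβ, ⟨by linarith, by nlinarith [mul_pos hβ0 hε0]⟩,
        ⟨by nlinarith [mul_pos hα0 hε0], by linarith⟩⟩
    have ha'I : a' ∈ I := hIooI ha'mem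
    have hb'I : b' ∈ I := hIooI hb'mem
    have hDne' : G b' - G a' ≠ 0 :=
      sub_ne_zero_of_ne (hGne a' ha'I b' hb'I ha'b'.ne)
    have hψ : HasDerivAt (fun t : ℝ => (t - α * a') / β) (1 / β) m := by
      simpa using ((hasDerivAt_id m).sub_const (α * a')).div_const β
    have hψm : (m - α * a') / β = b' := by
      rw [div_eq_iff hβ0.ne']
      linear_combination -hrep
    have hQ : HasDerivAt (fun t => (F t - F a') / (G t - G a'))
        ((f b' * (G b' - G a') - (F b' - F a') * g b') / (G b' - G a') ^ 2) b' :=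
      HasDerivAt.div ((hF b' (hIJ hb'I)).sub_const _) ((hG b' (hIJ hb'I)).sub_const _) hDne'
    refine ⟨(f b' * (G b' - G a') - (F b' - F a') * g b') / (G b' - G a') ^ 2 * (1 / β), ?_⟩
    have hcomp : HasDerivAt ((fun t => (F t - F a') / (G t - G a')) ∘ (fun t : ℝ => (t - α * a') / β))
        ((f b' * (G b' - G a') - (F b' - F a') * g b') / (G b' - G a') ^ 2 * (1 / β)) m := by
      apply HasDerivAt.comp
      · rw [hψm]; exact hQ
      · exact hψ
    apply hcomp.congr_of_eventuallyEq
    have hUopen : IsOpen ((fun t : ℝ => (t - α * a') / β) ⁻¹' (Set.Ioo c d \ {a'})) :=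
      (isOpen_Ioo.sdiff isClosed_singleton).preimage
        ((continuous_id.sub continuous_const).div_const β)
    have hmU : m ∈ (fun t : ℝ => (t - α * a') / β) ⁻¹' (Set.Ioo c d \ {a'}) := by
      refine Set.mem_preimage.mpr ?_
      rw [Set.mem_diff, hψm]
      exact ⟨hb'mem, by simp [ha'b'.ne']⟩
    filter_upwards [hUopen.mem_nhds hmU] with x hx
    have hyIoo : (x - α * a') / β ∈ Set.Ioo c d := hx.1
    have hyne : (x - α * a') / β ≠ a' := hx.2
    have hyI : (x - α * a') / β ∈ I := hIooI hyIoo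
    have hxrepr : α * a' + β * ((x - α * a') / β) = x := by
      field_simp
      ring
    have h := hkey a' ha'I _ hyI (Ne.symm hyne)
    rw [hxrepr] at h
    simpa [Function.comp] using h
  -- nonvanishing of G b - G a
  have hDne : G b - G a ≠ 0 := sub_ne_zero_of_ne (hGne a ha b hb hab)
  have hN : v m * (G b - G a) = F b - F a := by
    have h := hkey a ha b hb hab
    rw [eq_div_iff hDne] at h
    exact h
  have haIoo : a ∉ Set.Ioo c d := by
    intro hx
    rcases le_total a b with h | h
    · have h1 : c = a := min_eq_left h
      rw [h1] at hx
      exact lt_irrefl a hx.1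
    · have h1 : d = a := max_eq_left h
      rw [h1] at hx
      exact lt_irrefl a hx.2
  have hbIoo : b ∉ Set.Ioo c d := by
    intro hx
    rcases le_total a b with h | h
    · have h1 : d = b := max_eq_right h
      rw [h1] at hx
      exact lt_irrefl b hx.2
    · have h1 : c = b := min_eq_right h
      rw [h1] at hx
      exact lt_irrefl b hx.1
  have hIoone : (interior (Set.Ioo c d)).Nonempty := by
    rw [interior_Ioo]; exact ⟨m, hmcd⟩
  -- side b : derivative of t ↦ v (α a + β t) within I \ {a} at b
  have hudb : UniqueDiffWithinAt ℝ (I \ {a}) b := by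
    have h1 : UniqueDiffWithinAt ℝ (Set.Ioo c d) b := by
      apply uniqueDiffWithinAt_convex (convex_Ioo c d) hIoone
      rw [closure_Ioo hcd.ne]
      exact ⟨inf_le_right, le_sup_right⟩
    exact h1.mono (fun x hx => ⟨hIooI hx, fun hxa => haIoo (by rw [Set.mem_singleton_iff] at hxa; rwa [← hxa])⟩)
  have hQb : HasDerivAt (fun t => (F t - F a) / (G t - G a))
      ((f b * (G b - G a) - (F b - F a) * g b) / (G b - G a) ^ 2) b :=
    HasDerivAt.div ((hF b (hIJ hb)).sub_const _) ((hG b (hIJ hb)).sub_const _) hDne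
  have haffb : HasDerivAt (fun t : ℝ => α * a + β * t) β b := by
    simpa using ((hasDerivAt_id b).const_mul β).const_add (α * a)
  have hcompb : HasDerivAt (fun t => v (α * a + β * t)) (w * β) b := by
    have h := hw.comp b haffb
    simpa [Function.comp_def] using h
  have hvQb : HasDerivWithinAt (fun t => v (α * a + β * t))
      ((f b * (G b - G a) - (F b - F a) * g b) / (G b - G a) ^ 2) (I \ {a}) b := by
    apply hQb.hasDerivWithinAt.congr
    · intro x hx
      exact hkey a ha x hx.1 (fun hax => hx.2 (by simp [hax.symm]))
    · exact hkey a ha b hb hab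
  have hq : w * β = (f b * (G b - G a) - (F b - F a) * g b) / (G b - G a) ^ 2 := by
    rw [← hcompb.hasDerivWithinAt.derivWithin hudb, hvQb.derivWithin hudb]
  -- side a : derivative of t ↦ v (α t + β b) within I \ {b} at a
  have huda : UniqueDiffWithinAt ℝ (I \ {b}) a := by
    have h1 : UniqueDiffWithinAt ℝ (Set.Ioo c d) a := by
      apply uniqueDiffWithinAt_convex (convex_Ioo c d) hIoone
      rw [closure_Ioo hcd.ne]
      exact ⟨inf_le_left, le_sup_left⟩
    exact h1.mono (fun x hx => ⟨hIooI hx, fun hxb => hbIoo (by rw [Set.mem_singleton_iff] at hxb; rwa [← hxb])⟩)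
  have hPa : HasDerivAt (fun t => (F b - F t) / (G b - G t))
      ((-(f a) * (G b - G a) - (F b - F a) * (-(g a))) / (G b - G a) ^ 2) a :=
    HasDerivAt.div ((hF a (hIJ ha)).const_sub _) ((hG a (hIJ ha)).const_sub _) hDne
  have haffa : HasDerivAt (fun t : ℝ => α * t + β * b) α a := by
    simpa using ((hasDerivAt_id a).const_mul α).add_const (β * b)
  have hcompa : HasDerivAt (fun t => v (α * t + β * b)) (w * α) a := by
    have h := hw.comp a haffa
    simpa [Function.comp_def] using h
  have hvPa : HasDerivWithinAt (fun t => v (α * t + β * b))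
      ((-(f a) * (G b - G a) - (F b - F a) * (-(g a))) / (G b - G a) ^ 2) (I \ {b}) a := by
    apply hPa.hasDerivWithinAt.congr
    · intro x hx
      exact hkey x hx.1 b hb (fun hxb => hx.2 (by simp [hxb]))
    · exact hkey a ha b hb hab
  have hp : w * α = (-(f a) * (G b - G a) - (F b - F a) * (-(g a))) / (G b - G a) ^ 2 := by
    rw [← hcompa.hasDerivWithinAt.derivWithin huda, hvPa.derivWithin huda]
  -- final algebra
  have hga := hg a ha
  have hgb := hg b hb
  have hfa : g a * v a = f a := by rw [hv a ha]; field_simp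
  have hfb : g b * v b = f b := by rw [hv b hb]; field_simp
  have t2 : w * β * (G b - G a) = f b - v m * g b := by
    have h2 : (w * β) * (G b - G a) ^ 2 = f b * (G b - G a) - (F b - F a) * g b := by
      rw [hq, div_mul_cancel₀ _ (pow_ne_zero 2 hDne)]
    apply mul_right_cancel₀ hDne
    linear_combination h2 + g b * hN
  have t1 : w * α * (G b - G a) = v m * g a - f a := by
    have h2 : (w * α) * (G b - G a) ^ 2 = -(f a) * (G b - G a) - (F b - F a) * (-(g a)) := by
      rw [hp, div_mul_cancel₀ _ (pow_ne_zero 2 hDne)]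
    apply mul_right_cancel₀ hDne
    linear_combination h2 - g a * hN
  linear_combination (-β) * t1 + α * t2 + (-β) * hfa + (-α) * hfb
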